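/- Let X be a topological space. The subgroup QZ_b(X) of bounded residual functions is a direct summand of the group B(X,ℤ) of all bounded functions X → ℤ: there exists a subgroup H of B(X,ℤ) such that B(X,ℤ) is the internal direct sum of QZ_b(X) and H. -/

import Mathlib

/-- A function `f : X → ℤ` on a topological space is *residual* if `f⁻¹(0)`
contains an open dense subset of `X`. -/
def IsResidualFn {X : Type*} [TopologicalSpace X] (f : X → ℤ) : Prop :=
  ∃ U : Set X, IsOpen U ∧ Dense U ∧ U ⊆ f ⁻¹' {0}

/-- `B(X,ℤ)`: the group of all bounded functions `X → ℤ`, as a subgroup of `X → ℤ`. -/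
def boundedFns (X : Type*) : AddSubgroup (X → ℤ) where
  carrier := {f | ∃ N : ℤ, ∀ x, |f x| ≤ N}
  add_mem' := by
    rintro f g ⟨N, hN⟩ ⟨M, hM⟩
    exact ⟨N + M, fun x => (abs_add_le _ _).trans (add_le_add (hN x) (hM x))⟩
  zero_mem' := ⟨0, fun x => by simp⟩
  neg_mem' := by
    rintro f ⟨N, hN⟩
    exact ⟨N, fun x => by simpa using hN x⟩

/-- `QZ_b(X)`: the group of bounded residual functions, as a subgroup of `X → ℤ`. -/
def residualBoundedFns (X : Type*) [TopologicalSpace X] : AddSubgroup (X → ℤ) where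
  carrier := {f | IsResidualFn f ∧ f ∈ boundedFns X}
  add_mem' := by
    rintro f g ⟨⟨U, hU, hUd, hUf⟩, hfb⟩ ⟨⟨V, hV, hVd, hVg⟩, hgb⟩
    refine ⟨⟨U ∩ V, hU.inter hV, hUd.inter_of_isOpen_left hVd hU, fun x hx => ?_⟩,
      add_mem hfb hgb⟩
    have h1 : f x = 0 := hUf hx.1
    have h2 : g x = 0 := hVg hx.2
    simp [h1, h2]
  zero_mem' := ⟨⟨Set.univ, isOpen_univ, dense_univ, fun x _ => rfl⟩,
    zero_mem (boundedFns X)⟩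
  neg_mem' := by
    rintro f ⟨⟨U, hU, hUd, hUf⟩, hfb⟩
    refine ⟨⟨U, hU, hUd, fun x hx => ?_⟩, neg_mem hfb⟩
    have h1 : f x = 0 := hUf hx
    simp [h1]



open Set Filter

section Aux

/-- The value of `f` along the ultrafilter `u` (when it exists). -/
noncomputable def uval {X : Type*} (f : X → ℤ) (u : Ultrafilter X) : ℤ :=
  open scoped Classical in
  if h : ∃ v : ℤ, f ⁻¹' {v} ∈ u then h.choose else 0

lemma uval_unique {X : Type*} {f : X → ℤ} {u : Ultrafilter X} {v : ℤ}
    (hv : f ⁻¹' {v} ∈ u) : uval f u = v := by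
  have h : ∃ v : ℤ, f ⁻¹' {v} ∈ u := ⟨v, hv⟩
  rw [uval, dif_pos h]
  by_contra hne
  obtain ⟨x, hx1, hx2⟩ := Ultrafilter.nonempty_of_mem (inter_mem h.choose_spec hv)
  simp only [Set.mem_preimage, Set.mem_singleton_iff] at hx1 hx2
  exact hne (hx1 ▸ hx2 ▸ rfl)

lemma mem_uval {X : Type*} {f : X → ℤ} (hf : (Set.range f).Finite) (u : Ultrafilter X) :
    f ⁻¹' {uval f u} ∈ u := by
  have h : ∃ v : ℤ, f ⁻¹' {v} ∈ u := by
    have huniv : (⋃ v ∈ Set.range f, f ⁻¹' {v}) ∈ u := by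
      have he : (⋃ v ∈ Set.range f, f ⁻¹' {v}) = Set.univ := by ext x; simp
      rw [he]; exact Filter.univ_mem
    obtain ⟨v, _, hv⟩ := (Ultrafilter.finite_biUnion_mem_iff hf).mp huniv
    exact ⟨v, hv⟩
  rw [uval, dif_pos h]; exact h.choose_spec

lemma finite_range_of_bounded {X : Type*} {f : X → ℤ} (hf : f ∈ boundedFns X) :
    (Set.range f).Finite := by
  obtain ⟨N, hN⟩ := hf
  apply (Set.finite_Icc (-N) N).subset
  rintro _ ⟨x, rfl⟩
  exact abs_le.mp (hN x)

/-- The set of ultrafilters containing every dense open set. -/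
def resUF (X : Type*) [TopologicalSpace X] : Set (Ultrafilter X) :=
  {u | ∀ U : Set X, IsOpen U → Dense U → U ∈ u}

variable {X : Type*} [TopologicalSpace X]

lemma isClosed_resUF : IsClosed (resUF X) := by
  have he : resUF X =
      ⋂ U ∈ {U : Set X | IsOpen U ∧ Dense U}, {u : Ultrafilter X | U ∈ u} := by
    ext u
    simp only [resUF, Set.mem_setOf_eq, Set.mem_iInter]
    exact ⟨fun h U hU => h U hU.1 hU.2, fun h U h1 h2 => h U ⟨h1, h2⟩⟩
  rw [he]
  exact isClosed_biInter fun U _ => ultrafilter_isClosed_basic U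

instance : CompactSpace (resUF X) :=
  isCompact_iff_compactSpace.mp isClosed_resUF.isCompact

instance : Module.Free ℤ (LocallyConstant (resUF X) ℤ) :=
  LocallyConstant.freeOfProfinite (Profinite.of (resUF X))

lemma isLC (f : boundedFns X) :
    IsLocallyConstant (fun w : resUF X => uval (f : X → ℤ) w.1) := by
  rw [IsLocallyConstant.iff_isOpen_fiber]
  intro v
  have he : (fun w : resUF X => uval (f : X → ℤ) w.1) ⁻¹' {v}
      = Subtype.val ⁻¹' {u : Ultrafilter X | (f : X → ℤ) ⁻¹' {v} ∈ u} := by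
    ext w
    simp only [Set.mem_preimage, Set.mem_singleton_iff, Set.mem_setOf_eq]
    constructor
    · rintro rfl; exact mem_uval (finite_range_of_bounded f.2) w.1
    · exact uval_unique
  rw [he]
  exact (ultrafilter_isOpen_basic _).preimage continuous_subtype_val

/-- The restriction homomorphism to the Stone space of the dense-open filter. -/
noncomputable def Phi : boundedFns X →+ LocallyConstant (resUF X) ℤ where
  toFun f := ⟨fun w => uval (f : X → ℤ) w.1, isLC f⟩
  map_zero' := by
    ext w
    have : ((0 : boundedFns X) : X → ℤ) ⁻¹' {0} ∈ w.1 := by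
      have : ((0 : boundedFns X) : X → ℤ) ⁻¹' {(0:ℤ)} = Set.univ := by
        ext x; simp
      rw [this]; exact Filter.univ_mem
    simpa using uval_unique this
  map_add' f g := by
    ext w
    have hf := mem_uval (finite_range_of_bounded f.2) w.1
    have hg := mem_uval (finite_range_of_bounded g.2) w.1
    have hmem : ((f + g : boundedFns X) : X → ℤ) ⁻¹'
        {uval (f : X → ℤ) w.1 + uval (g : X → ℤ) w.1} ∈ w.1 := by
      refine mem_of_superset (inter_mem hf hg) ?_
      rintro x ⟨h1, h2⟩
      simp only [Set.mem_preimage, Set.mem_singleton_iff] at h1 h2 ⊢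
      simp [h1, h2]
    simpa using uval_unique hmem

@[simp] lemma Phi_apply (f : boundedFns X) (w : resUF X) :
    Phi f w = uval (f : X → ℤ) w.1 := rfl

lemma Phi_eq_zero_of_residual {f : boundedFns X} (h : IsResidualFn (f : X → ℤ)) :
    Phi f = 0 := by
  ext w
  obtain ⟨U, hUo, hUd, hUf⟩ := h
  simpa using uval_unique (mem_of_superset (w.2 U hUo hUd) hUf)

lemma sInter_dense_open {ts : Set (Set X)} (hfin : ts.Finite)
    (h : ∀ U ∈ ts, IsOpen U ∧ Dense U) : IsOpen (⋂₀ ts) ∧ Dense (⋂₀ ts) := by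
  revert h
  refine Set.Finite.induction_on (motive := fun ts _ => (∀ U ∈ ts, IsOpen U ∧ Dense U) →
    IsOpen (⋂₀ ts) ∧ Dense (⋂₀ ts)) ts hfin (fun _ => by simp) ?_
  intro a s _ _ ih h
  rw [Set.sInter_insert]
  have h1 := h a (Set.mem_insert _ _)
  have h2 := ih fun U hU => h U (Set.mem_insert_of_mem _ hU)
  exact ⟨h1.1.inter h2.1, h1.2.inter_of_isOpen_left h2.2 h1.1⟩

lemma residual_of_Phi_eq_zero {f : boundedFns X} (h : Phi f = 0) :
    IsResidualFn (f : X → ℤ) := by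
  by_contra hres
  set S : Set (Set X) := {U | IsOpen U ∧ Dense U} with hS
  have hne : Filter.NeBot (Filter.generate S ⊓ 𝓟 (((f : X → ℤ) ⁻¹' {0})ᶜ)) := by
    rw [Filter.inf_principal_neBot_iff]
    intro t ht
    rcases Filter.mem_generate_iff.mp ht with ⟨ts, hts, htfin, hsub⟩
    have hD := sInter_dense_open htfin fun U hU => hts hU
    by_contra hemp
    rw [Set.not_nonempty_iff_eq_empty] at hemp
    have hsub0 : ⋂₀ ts ⊆ (f : X → ℤ) ⁻¹' {0} := by
      intro x hx
      by_contra hx0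
      have : x ∈ t ∩ ((f : X → ℤ) ⁻¹' {0})ᶜ := ⟨hsub hx, hx0⟩
      rw [hemp] at this
      exact this
    exact hres ⟨⋂₀ ts, hD.1, hD.2, hsub0⟩
  obtain ⟨u, hu⟩ :=
    Ultrafilter.exists_le (Filter.generate S ⊓ 𝓟 (((f : X → ℤ) ⁻¹' {0})ᶜ))
  have huK : u ∈ resUF X := fun U hUo hUd =>
    (hu.trans inf_le_left) (Filter.mem_generate_of_mem ⟨hUo, hUd⟩)
  have h0 : uval (f : X → ℤ) u = 0 := by
    have := DFunLike.congr_fun h (⟨u, huK⟩ : resUF X)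
    simpa using this
  have hmem : (f : X → ℤ) ⁻¹' {0} ∈ u := h0 ▸ mem_uval (finite_range_of_bounded f.2) u
  have hmemc : ((f : X → ℤ) ⁻¹' {0})ᶜ ∈ u := (hu.trans inf_le_right) (mem_principal_self _)
  obtain ⟨x, hx1, hx2⟩ := Ultrafilter.nonempty_of_mem (inter_mem hmem hmemc)
  exact hx2 hx1

lemma exists_basic {C : Set (resUF X)} (hC : IsClopen C) :
    ∃ s : Set X, ∀ w : resUF X, w ∈ C ↔ s ∈ w.1 := by
  classical
  set D : Set (Ultrafilter X) := Subtype.val '' Cᶜ with hD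
  have hDcomp : IsCompact D :=
    ((hC.2.isClosed_compl).isCompact).image continuous_subtype_val
  have hDclosed : IsClosed D := hDcomp.isClosed
  have hCcomp : IsCompact (Subtype.val '' C) :=
    (hC.1.isCompact).image continuous_subtype_val
  have hsep : ∀ u : Subtype.val '' C, ∃ s : Set X,
      u.1 ∈ {x : Ultrafilter X | s ∈ x} ∧ {x : Ultrafilter X | s ∈ x} ⊆ Dᶜ := by
    rintro ⟨u, w, hwC, rfl⟩
    have hu : (w : Ultrafilter X) ∉ D := by
      rintro ⟨w', hw', hww'⟩
      exact hw' (by rw [show w' = w from Subtype.ext hww']; exact hwC)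
    obtain ⟨b, hb, hub, hbsub⟩ :=
      ultrafilterBasis_is_basis.exists_subset_of_mem_open hu hDclosed.isOpen_compl
    obtain ⟨s, rfl⟩ := hb
    exact ⟨s, hub, hbsub⟩
  choose sfun hmem hsub using hsep
  have hcover : Subtype.val '' C ⊆ ⋃ i : Subtype.val '' C, {x : Ultrafilter X | sfun i ∈ x} :=
    fun u hu => Set.mem_iUnion.mpr ⟨⟨u, hu⟩, hmem ⟨u, hu⟩⟩
  obtain ⟨t, ht⟩ := hCcomp.elim_finite_subcover _
    (fun i => ultrafilter_isOpen_basic (sfun i)) hcover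
  refine ⟨⋃ i ∈ t, sfun i, fun w => ?_⟩
  constructor
  · intro hw
    obtain ⟨i, hit, hi⟩ := Set.mem_iUnion₂.mp (ht ⟨w, hw, rfl⟩)
    exact mem_of_superset hi (Set.subset_biUnion_of_mem hit)
  · intro hw
    obtain ⟨i, hit, hi⟩ := (Ultrafilter.finite_biUnion_mem_iff t.finite_toSet).mp hw
    by_contra hwC
    exact hsub i hi ⟨w, hwC, rfl⟩

lemma Phi_surjective : Function.Surjective (Phi (X := X)) := by
  classical
  intro g
  have hfin := g.range_finite
  set T : Finset ℤ := hfin.toFinset with hT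
  have hc : ∀ v : ℤ, ∃ s : Set X, ∀ w : resUF X, g w = v ↔ s ∈ w.1 := by
    intro v
    obtain ⟨s, hs⟩ := exists_basic (g.isLocallyConstant.isClopen_fiber v)
    exact ⟨s, fun w => by simpa using hs w⟩
  choose sf hsf using hc
  set f : X → ℤ := fun x => ∑ v ∈ T, v * (if x ∈ sf v then 1 else 0) with hf
  have hfb : f ∈ boundedFns X := by
    refine ⟨∑ v ∈ T, |v|, fun x => ?_⟩
    calc |f x| ≤ ∑ v ∈ T, |v * (if x ∈ sf v then 1 else 0)| :=
          Finset.abs_sum_le_sum_abs _ _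
      _ ≤ ∑ v ∈ T, |v| := by
          refine Finset.sum_le_sum fun v _ => ?_
          rw [abs_mul]
          by_cases hx : x ∈ sf v <;> simp [hx]
  refine ⟨⟨f, hfb⟩, ?_⟩
  ext w
  set v₀ := g w with hv₀
  have hv₀T : v₀ ∈ T := hfin.mem_toFinset.mpr ⟨w, rfl⟩
  have hA : (sf v₀ ∩ ⋂ v ∈ (T.erase v₀ : Finset ℤ), (sf v)ᶜ) ∈ w.1 := by
    refine inter_mem ((hsf v₀ w).mp rfl) ?_
    refine (biInter_mem (T.erase v₀).finite_toSet).mpr fun v hv => ?_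
    show (sf v)ᶜ ∈ w.1
    rw [Ultrafilter.compl_mem_iff_notMem]
    intro hvmem
    exact (Finset.mem_erase.mp hv).1 (hv₀.trans ((hsf v w).mpr hvmem)).symm
  have hval : f ⁻¹' {v₀} ∈ w.1 := by
    refine mem_of_superset hA ?_
    rintro x ⟨hx0, hxr⟩
    simp only [Set.mem_preimage, Set.mem_singleton_iff, hf]
    rw [Finset.sum_eq_single_of_mem v₀ hv₀T]
    · simp [hx0]
    · intro v hvT hvne
      have hxv : x ∉ sf v := by
        have := Set.mem_iInter₂.mp hxr v (Finset.mem_erase.mpr ⟨hvne, hvT⟩)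
        exact this
      simp [hxv]
  simpa using uval_unique hval

end Aux

/-- `QZ_b(X)` is a direct summand of `B(X,ℤ)`: there is a subgroup `H` of `B(X,ℤ)`
such that `B(X,ℤ)` is the internal direct sum of `QZ_b(X)` and `H`. -/
theorem residualBounded_direct_summand (X : Type*) [TopologicalSpace X] :
    ∃ H : AddSubgroup (X → ℤ), H ≤ boundedFns X ∧
      residualBoundedFns X ⊓ H = ⊥ ∧ residualBoundedFns X ⊔ H = boundedFns X := by
  classical
  let L : (boundedFns X) →ₗ[ℤ] LocallyConstant (resUF X) ℤ := (Phi (X := X)).toIntLinearMap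
  have hLsurj : Function.Surjective L := Phi_surjective
  obtain ⟨s, hs⟩ := Module.projective_lifting_property L LinearMap.id hLsurj
  have hsec : ∀ c, L (s c) = c := fun c => LinearMap.congr_fun hs c
  refine ⟨AddSubgroup.map (boundedFns X).subtype (AddMonoidHom.range s.toAddMonoidHom),
    ?_, ?_, ?_⟩
  · rintro g ⟨b, -, rfl⟩
    exact b.2
  · rw [eq_bot_iff]
    rintro g ⟨⟨hres, hgb⟩, hgH⟩
    obtain ⟨b, ⟨c, hc⟩, hbg⟩ := hgH
    have h0 : Phi b = 0 := Phi_eq_zero_of_residual (show IsResidualFn ((boundedFns X).subtype b) by rw [hbg]; exact hres)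
    have hc0 : c = 0 := by
      have h1 := hsec c
      rw [show s c = b from hc] at h1
      rw [← h1]
      exact h0
    have hb0 : b = 0 := by rw [← hc, hc0, map_zero]
    rw [AddSubgroup.mem_bot, ← hbg, hb0]
    rfl
  · apply le_antisymm
    · exact sup_le (fun g hg => hg.2) (by rintro g ⟨b, -, rfl⟩; exact b.2)
    · intro g hg
      set b : boundedFns X := ⟨g, hg⟩ with hb
      set c := L b with hcdef
      have hPhi0 : Phi (b - s c) = 0 := by
        show L (b - s c) = 0
        rw [map_sub, hsec c]
        exact sub_self _
      have h1 : ((b - s c : boundedFns X) : X → ℤ) ∈ residualBoundedFns X :=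
        ⟨residual_of_Phi_eq_zero hPhi0, (b - s c).2⟩
      have h2 : ((s c : boundedFns X) : X → ℤ) ∈
          AddSubgroup.map (boundedFns X).subtype (AddMonoidHom.range s.toAddMonoidHom) :=
        ⟨s c, ⟨c, rfl⟩, rfl⟩
      have hgeq : g = ((b - s c : boundedFns X) : X → ℤ) + ((s c : boundedFns X) : X → ℤ) := by
        simp [hb]
      rw [hgeq]
      exact add_mem (AddSubgroup.mem_sup_left h1) (AddSubgroup.mem_sup_right h2)
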